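/- For every integer x and every prime number ℓ, it is not the case that ℓ divides 4x³ + 9x² − 3 and ℓ² divides x⁴ + 4x³ + 3x² − 2x − 1. -/

import Mathlib

lemma zmod25_aux : ∀ y : ZMod 25,
    ¬ (4 * (ZMod.castHom (by norm_num : (5:ℕ) ∣ 25) (ZMod 5) y) ^ 3 +
        9 * (ZMod.castHom (by norm_num : (5:ℕ) ∣ 25) (ZMod 5) y) ^ 2 - 3 = 0 ∧
       y ^ 4 + 4 * y ^ 3 + 3 * y ^ 2 - 2 * y - 1 = 0) := by decide

/-- For every integer `x` and every prime `ℓ`, it is not the case that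
`ℓ ∣ 4x³ + 9x² − 3` and `ℓ² ∣ x⁴ + 4x³ + 3x² − 2x − 1`. -/
theorem stmt_8 (x : ℤ) (ℓ : ℕ) (hℓ : ℓ.Prime) :
    ¬ ((ℓ : ℤ) ∣ 4 * x ^ 3 + 9 * x ^ 2 - 3 ∧
        (ℓ : ℤ) ^ 2 ∣ x ^ 4 + 4 * x ^ 3 + 3 * x ^ 2 - 2 * x - 1) := by
  rintro ⟨hj, hN2⟩
  have hN : (ℓ : ℤ) ∣ x ^ 4 + 4 * x ^ 3 + 3 * x ^ 2 - 2 * x - 1 :=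
    dvd_trans (dvd_pow_self _ two_ne_zero) hN2
  have h5 : (ℓ : ℤ) ∣ 5 := by
    have := dvd_add (Dvd.dvd.mul_left hN (1 - 14 * x - 8 * x ^ 2))
      (Dvd.dvd.mul_left hj (2 * x ^ 3 + 7 * x ^ 2 + 4 * x - 2))
    convert this using 1
    · rfl
    ring
  have hℓ5 : ℓ = 5 := by
    have h := Int.ofNat_dvd.mp (by exact_mod_cast h5)
    exact (Nat.prime_dvd_prime_iff_eq hℓ (by norm_num)).mp h
  subst hℓ5
  have hj5 : ((4 * x ^ 3 + 9 * x ^ 2 - 3 : ℤ) : ZMod 5) = 0 := by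
    rw [ZMod.intCast_zmod_eq_zero_iff_dvd]; exact_mod_cast hj
  have hN2' : (25 : ℤ) ∣ x ^ 4 + 4 * x ^ 3 + 3 * x ^ 2 - 2 * x - 1 := by
    have : ((5 : ℤ)) ^ 2 = (25 : ℤ) := by norm_num
    rw [← this]; exact_mod_cast hN2
  have hN25 : ((x ^ 4 + 4 * x ^ 3 + 3 * x ^ 2 - 2 * x - 1 : ℤ) : ZMod 25) = 0 := by
    rw [ZMod.intCast_zmod_eq_zero_iff_dvd]; exact_mod_cast hN2'
  push_cast at hj5 hN25
  have hcast : (x : ZMod 5) =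
      ZMod.castHom (by norm_num : (5:ℕ) ∣ 25) (ZMod 5) (x : ZMod 25) := by
    simp
  rw [hcast] at hj5
  exact zmod25_aux (x : ZMod 25) ⟨hj5, hN25⟩
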